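/- arXiv:1010.3456 — 3 statements merged into one kernel-verified Lean document; each statement's English description precedes it below -/
import Mathlib

section
/- With the coupled boundary condition at z = z₁, the following energy identity holds: ‖∂̄η₊‖² + ‖∂̄η₋‖² = (1/4)‖dη₊‖² + (1/4)‖dη₋‖², where ∂̄ = (1/2)(∂_x + i∂_z), all norms are L² norms over the respective domains, and dη denotes the full gradient. -/
open MeasureTheory

/-- Partial derivative in the `x`-direction. -/
noncomputable def Dx (f : ℝ × ℝ → ℂ) (p : ℝ × ℝ) : ℂ := fderiv ℝ f p (1, 0)

/-- Partial derivative in the `z`-direction. -/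
noncomputable def Dz (f : ℝ × ℝ → ℂ) (p : ℝ × ℝ) : ℂ := fderiv ℝ f p (0, 1)

/-- The operator `∂̄ = (1/2)(∂_x + i ∂_z)`. -/
noncomputable def dbar (f : ℝ × ℝ → ℂ) (p : ℝ × ℝ) : ℂ :=
  (1 / 2) * (Dx f p + Complex.I * Dz f p)

open Set

noncomputable def px (u : ℝ × ℝ → ℝ) (p : ℝ × ℝ) : ℝ := fderiv ℝ u p (1, 0)
noncomputable def pz (u : ℝ × ℝ → ℝ) (p : ℝ × ℝ) : ℝ := fderiv ℝ u p (0, 1)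

lemma contDiff_px {u : ℝ × ℝ → ℝ} (hu : ContDiff ℝ (⊤:ℕ∞) u) : ContDiff ℝ (⊤:ℕ∞) (px u) :=
  (hu.fderiv_right (by exact_mod_cast le_top)).clm_apply contDiff_const

lemma contDiff_pz {u : ℝ × ℝ → ℝ} (hu : ContDiff ℝ (⊤:ℕ∞) u) : ContDiff ℝ (⊤:ℕ∞) (pz u) :=
  (hu.fderiv_right (by exact_mod_cast le_top)).clm_apply contDiff_const

lemma hcs_px {u : ℝ × ℝ → ℝ} (hu : HasCompactSupport u) : HasCompactSupport (px u) :=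
  hu.fderiv_apply ℝ (1,0)

lemma hcs_pz {u : ℝ × ℝ → ℝ} (hu : HasCompactSupport u) : HasCompactSupport (pz u) :=
  hu.fderiv_apply ℝ (0,1)

lemma slice_x {u : ℝ × ℝ → ℝ} (hu : ContDiff ℝ (⊤:ℕ∞) u) (z x : ℝ) :
    HasDerivAt (fun x => u (x, z)) (px u (x, z)) x :=
  ((hu.differentiable (by simp) (x, z)).hasFDerivAt).comp_hasDerivAt x
    ((hasDerivAt_id x).prodMk (hasDerivAt_const x z))

lemma slice_z {u : ℝ × ℝ → ℝ} (hu : ContDiff ℝ (⊤:ℕ∞) u) (x z : ℝ) :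
    HasDerivAt (fun z => u (x, z)) (pz u (x, z)) z :=
  ((hu.differentiable (by simp) (x, z)).hasFDerivAt).comp_hasDerivAt z
    ((hasDerivAt_const z x).prodMk (hasDerivAt_id z))

lemma slice_hcs_x {u : ℝ × ℝ → ℝ} (hu : HasCompactSupport u) (z : ℝ) :
    HasCompactSupport (fun x => u (x, z)) := by
  apply IsCompact.closure_of_subset (hu.image continuous_fst)
  intro x hx
  exact ⟨(x, z), subset_closure hx, rfl⟩

lemma integral_deriv_cs (g g' : ℝ → ℝ) (hd : ∀ x, HasDerivAt g (g' x) x)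
    (hc : Continuous g') (hs : HasCompactSupport g) (hs' : HasCompactSupport g') :
    ∫ x, g' x = 0 := by
  obtain ⟨R, hR⟩ := (hs.union hs').isBounded.subset_closedBall 0
  have hsub : tsupport g ∪ tsupport g' ⊆ Icc (-|R|) |R| := by
    refine hR.trans ?_
    rw [Real.closedBall_eq_Icc]
    exact Icc_subset_Icc (by simp [neg_le_neg (le_abs_self R)]) (by simpa using le_abs_self R)
  set S : ℝ := |R| + 1 with hSdef
  have hle : -S ≤ S := by have := abs_nonneg R; simp only [hSdef]; linarith
  have hg'S : ∀ x, x ∉ Icc (-S) S → g' x = 0 := by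
    intro x hx
    refine image_eq_zero_of_notMem_tsupport fun h => hx ?_
    have := hsub (Or.inr h)
    rw [mem_Icc] at this ⊢
    constructor <;> [linarith [this.1]; linarith [this.2]]
  have hgS : g S = 0 := by
    refine image_eq_zero_of_notMem_tsupport fun h => ?_
    have := (hsub (Or.inl h)).2
    linarith
  have hgS' : g (-S) = 0 := by
    refine image_eq_zero_of_notMem_tsupport fun h => ?_
    have := (hsub (Or.inl h)).1
    have h2 := abs_nonneg R
    simp only [hSdef] at this
    linarith
  calc ∫ x, g' x = ∫ x in Icc (-S) S, g' x :=
        (setIntegral_eq_integral_of_forall_compl_eq_zero fun x hx => hg'S x hx).symm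
    _ = ∫ x in Ioc (-S) S, g' x := integral_Icc_eq_integral_Ioc
    _ = ∫ x in (-S)..S, g' x := (intervalIntegral.integral_of_le hle).symm
    _ = g S - g (-S) :=
        intervalIntegral.integral_eq_sub_of_hasDerivAt (fun x _ => hd x)
          (hc.intervalIntegrable _ _)
    _ = 0 := by rw [hgS, hgS', sub_zero]

lemma fderiv_mul_apply' {u v : ℝ × ℝ → ℝ} (hu : ContDiff ℝ (⊤:ℕ∞) u) (hv : ContDiff ℝ (⊤:ℕ∞) v)
    (p : ℝ × ℝ) (w : ℝ × ℝ) :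
    fderiv ℝ (fun q => u q * v q) p w = u p * fderiv ℝ v p w + v p * fderiv ℝ u p w := by
  rw [fderiv_fun_mul (hu.differentiable (by simp) p)
    (hv.differentiable (by simp) p)]
  simp

lemma mixed_symm {u : ℝ × ℝ → ℝ} (hu : ContDiff ℝ (⊤:ℕ∞) u) (p : ℝ × ℝ) :
    px (pz u) p = pz (px u) p := by
  have hd2 : Differentiable ℝ (fderiv ℝ u) :=
    (hu.fderiv_right (m := ((⊤:ℕ∞) : WithTop ℕ∞)) (by exact_mod_cast le_top)).differentiable
      (by simp)
  have key := second_derivative_symmetric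
    (fun y => (hu.differentiable (by simp) y).hasFDerivAt)
    (hd2 p).hasFDerivAt ((1:ℝ), (0:ℝ)) ((0:ℝ), (1:ℝ))
  have e1 : ∀ w v : ℝ × ℝ, fderiv ℝ (fun q => fderiv ℝ u q w) p v = fderiv ℝ (fderiv ℝ u) p v w := by
    intro w v
    rw [fderiv_clm_apply (hd2 p) (differentiableAt_const w)]
    simp
  show fderiv ℝ (fun q => fderiv ℝ u q (0,1)) p (1,0) = fderiv ℝ (fun q => fderiv ℝ u q (1,0)) p (0,1)
  rw [e1, e1, key]

lemma strip_integral (a b : ℝ) (hab : a ≤ b) (φ ζ : ℝ × ℝ → ℝ)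
    (hφ : ContDiff ℝ (⊤:ℕ∞) φ) (hζ : ContDiff ℝ (⊤:ℕ∞) ζ)
    (hφs : HasCompactSupport φ) (hζs : HasCompactSupport ζ) :
    ∫ p in Set.univ ×ˢ Set.Icc a b, (px ζ p * pz φ p - px φ p * pz ζ p) =
      ∫ x : ℝ, (ζ (x, a) * px φ (x, a) - ζ (x, b) * px φ (x, b)) := by
  set H : ℝ × ℝ → ℝ := fun p => ζ p * pz φ p with hHdef
  set G : ℝ × ℝ → ℝ := fun p => ζ p * px φ p with hGdef
  have hHsm : ContDiff ℝ (⊤:ℕ∞) H := hζ.mul (contDiff_pz hφ)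
  have hGsm : ContDiff ℝ (⊤:ℕ∞) G := hζ.mul (contDiff_px hφ)
  have hHs : HasCompactSupport H := hζs.mul_right
  have hGs : HasCompactSupport G := hζs.mul_right
  have hpt : ∀ p, px ζ p * pz φ p - px φ p * pz ζ p = px H p - pz G p := by
    intro p
    have h1 : px H p = ζ p * px (pz φ) p + pz φ p * px ζ p :=
      fderiv_mul_apply' hζ (contDiff_pz hφ) p (1,0)
    have h2 : pz G p = ζ p * pz (px φ) p + px φ p * pz ζ p :=
      fderiv_mul_apply' hζ (contDiff_px hφ) p (0,1)
    rw [h1, h2, mixed_symm hφ p]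
    ring
  have hmeas : (volume : Measure (ℝ × ℝ)).restrict (Set.univ ×ˢ Set.Icc a b) =
      ((volume : Measure ℝ).restrict Set.univ).prod ((volume : Measure ℝ).restrict (Set.Icc a b)) := by
    rw [Measure.volume_eq_prod, Measure.prod_restrict]
  have hint : ∀ (f : ℝ × ℝ → ℝ), Continuous f → HasCompactSupport f →
      Integrable f (((volume : Measure ℝ).restrict Set.univ).prod
        ((volume : Measure ℝ).restrict (Set.Icc a b))) := by
    intro f hc hcs
    rw [← hmeas]
    exact (hc.integrable_of_hasCompactSupport hcs).restrict
  have h1 : (∫ p in Set.univ ×ˢ Set.Icc a b, px H p) = 0 := by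
    rw [show (∫ p in Set.univ ×ˢ Set.Icc a b, px H p) = ∫ p, px H p ∂(((volume : Measure ℝ).restrict Set.univ).prod ((volume : Measure ℝ).restrict (Set.Icc a b))) from by rw [hmeas]]
    rw [integral_prod_symm _ (hint _ (contDiff_px hHsm).continuous (hcs_px hHs))]
    have inner : ∀ z : ℝ, (∫ x, px H (x, z) ∂((volume : Measure ℝ).restrict Set.univ)) = 0 := by
      intro z
      rw [Measure.restrict_univ]
      exact integral_deriv_cs (fun x => H (x, z)) (fun x => px H (x, z))
        (fun x => slice_x hHsm z x) (Continuous.comp (contDiff_px hHsm).continuous (by fun_prop))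
        (slice_hcs_x hHs z) (slice_hcs_x (hcs_px hHs) z)
    simp only [inner, integral_zero]
  have h2 : (∫ p in Set.univ ×ˢ Set.Icc a b, pz G p) =
      ∫ x : ℝ, (G (x, b) - G (x, a)) := by
    rw [show (∫ p in Set.univ ×ˢ Set.Icc a b, pz G p) = ∫ p, pz G p ∂(((volume : Measure ℝ).restrict Set.univ).prod ((volume : Measure ℝ).restrict (Set.Icc a b))) from by rw [hmeas]]
    rw [integral_prod _ (hint _ (contDiff_pz hGsm).continuous (hcs_pz hGs))]
    rw [Measure.restrict_univ]
    refine integral_congr_ae (Filter.Eventually.of_forall fun x => ?_)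
    show (∫ z in Icc a b, pz G (x, z)) = G (x, b) - G (x, a)
    rw [integral_Icc_eq_integral_Ioc, ← intervalIntegral.integral_of_le hab]
    exact intervalIntegral.integral_eq_sub_of_hasDerivAt (fun z _ => slice_z hGsm x z)
      ((Continuous.comp (contDiff_pz hGsm).continuous (by fun_prop)).intervalIntegrable _ _)
  calc ∫ p in Set.univ ×ˢ Set.Icc a b, (px ζ p * pz φ p - px φ p * pz ζ p)
      = ∫ p in Set.univ ×ˢ Set.Icc a b, (px H p - pz G p) :=
        integral_congr_ae (Filter.Eventually.of_forall fun p => hpt p)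
    _ = (∫ p in Set.univ ×ˢ Set.Icc a b, px H p) - ∫ p in Set.univ ×ˢ Set.Icc a b, pz G p :=
        integral_sub (((contDiff_px hHsm).continuous.integrable_of_hasCompactSupport (hcs_px hHs)).restrict)
          (((contDiff_pz hGsm).continuous.integrable_of_hasCompactSupport (hcs_pz hGs)).restrict)
    _ = - ∫ x : ℝ, (G (x, b) - G (x, a)) := by rw [h1, h2, zero_sub]
    _ = ∫ x : ℝ, (ζ (x, a) * px φ (x, a) - ζ (x, b) * px φ (x, b)) := by
        rw [← integral_neg]
        refine integral_congr_ae (Filter.Eventually.of_forall fun x => ?_)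
        simp only [hGdef, neg_sub]

lemma norm_sq_mk (a c : ℝ) : ‖(a:ℂ) + (c:ℂ) * Complex.I‖^2 = a^2 + c^2 := by
  rw [Complex.sq_norm, Complex.normSq_apply]
  simp
  ring

lemma eta_fderiv {φ ζ : ℝ × ℝ → ℝ} (hφ : ContDiff ℝ (⊤:ℕ∞) φ) (hζ : ContDiff ℝ (⊤:ℕ∞) ζ)
    {η : ℝ × ℝ → ℂ} (hη : ∀ p, η p = (φ p : ℂ) + (ζ p : ℂ) * Complex.I) (p : ℝ × ℝ) :
    Dx η p = (px φ p : ℂ) + (px ζ p : ℂ) * Complex.I ∧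
    Dz η p = (pz φ p : ℂ) + (pz ζ p : ℂ) * Complex.I := by
  have hfun : η = fun q => φ q • (1:ℂ) + ζ q • Complex.I := by
    funext q
    rw [hη q]
    simp [Complex.real_smul]
  have h : HasFDerivAt η ((fderiv ℝ φ p).smulRight (1:ℂ) + (fderiv ℝ ζ p).smulRight Complex.I) p := by
    rw [hfun]
    exact (((hφ.differentiable (by simp) p).hasFDerivAt).smul_const (1:ℂ)).add
      (((hζ.differentiable (by simp) p).hasFDerivAt).smul_const Complex.I)
  constructor <;>
  · show fderiv ℝ η p _ = _
    rw [h.fderiv]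
    simp [px, pz, Complex.real_smul]

lemma key_alg (a b c d : ℝ) :
    ‖(1/2:ℂ) * (((a:ℂ) + (c:ℂ)*Complex.I) + Complex.I * ((b:ℂ) + (d:ℂ)*Complex.I))‖^2
    = (1/4)*(‖(a:ℂ)+(c:ℂ)*Complex.I‖^2 + ‖(b:ℂ)+(d:ℂ)*Complex.I‖^2) + (1/2)*(c*b - a*d) := by
  have e : (1/2:ℂ) * (((a:ℂ) + (c:ℂ)*Complex.I) + Complex.I * ((b:ℂ) + (d:ℂ)*Complex.I))
      = ((((a-d)/2 : ℝ)):ℂ) + (((c+b)/2 : ℝ):ℂ) * Complex.I := by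
    apply Complex.ext <;> simp <;> ring
  rw [e, norm_sq_mk, norm_sq_mk, norm_sq_mk]
  ring

lemma strip_energy (a b : ℝ) (hab : a ≤ b) (φ ζ : ℝ × ℝ → ℝ)
    (hφ : ContDiff ℝ (⊤:ℕ∞) φ) (hζ : ContDiff ℝ (⊤:ℕ∞) ζ)
    (hφs : HasCompactSupport φ) (hζs : HasCompactSupport ζ)
    (η : ℝ × ℝ → ℂ) (hη : ∀ p, η p = (φ p : ℂ) + (ζ p : ℂ) * Complex.I) :
    (∫ p in Set.univ ×ˢ Set.Icc a b, ‖dbar η p‖ ^ 2) =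
      (1/4) * (∫ p in Set.univ ×ˢ Set.Icc a b, ‖Dx η p‖ ^ 2 + ‖Dz η p‖ ^ 2) +
      (1/2) * ∫ x : ℝ, (ζ (x, a) * px φ (x, a) - ζ (x, b) * px φ (x, b)) := by
  set Qr : ℝ × ℝ → ℝ := fun p =>
    px φ p * px φ p + px ζ p * px ζ p + (pz φ p * pz φ p + pz ζ p * pz ζ p) with hQdef
  set F : ℝ × ℝ → ℝ := fun p => px ζ p * pz φ p - px φ p * pz ζ p with hFdef
  have hQc : Continuous Qr := by
    have h1 := (contDiff_px hφ).continuous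
    have h2 := (contDiff_px hζ).continuous
    have h3 := (contDiff_pz hφ).continuous
    have h4 := (contDiff_pz hζ).continuous
    fun_prop
  have hFc : Continuous F := by
    have h1 := (contDiff_px hφ).continuous
    have h2 := (contDiff_px hζ).continuous
    have h3 := (contDiff_pz hφ).continuous
    have h4 := (contDiff_pz hζ).continuous
    fun_prop
  have hQs : HasCompactSupport Qr :=
    (((hcs_px hφs).mul_right).add ((hcs_px hζs).mul_right)).add
      (((hcs_pz hφs).mul_right).add ((hcs_pz hζs).mul_right))
  have hFs : HasCompactSupport F := by
    refine hζs.mono' fun p hp => ?_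
    by_contra hc
    have h0 : fderiv ℝ ζ p = 0 := fderiv_of_notMem_tsupport ℝ hc
    apply hp
    simp [hFdef, px, pz, h0]
  have hi : ∀ p, ‖Dx η p‖ ^ 2 + ‖Dz η p‖ ^ 2 = Qr p := by
    intro p
    obtain ⟨e1, e2⟩ := eta_fderiv hφ hζ hη p
    rw [e1, e2, norm_sq_mk, norm_sq_mk]
    simp only [hQdef]
    ring
  have hii : ∀ p, ‖dbar η p‖ ^ 2 = (1/4) * Qr p + (1/2) * F p := by
    intro p
    obtain ⟨e1, e2⟩ := eta_fderiv hφ hζ hη p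
    have : dbar η p = (1/2:ℂ) * (((px φ p :ℂ) + (px ζ p:ℂ)*Complex.I) +
        Complex.I * ((pz φ p:ℂ) + (pz ζ p:ℂ)*Complex.I)) := by
      rw [dbar, e1, e2]
    rw [this, key_alg, norm_sq_mk, norm_sq_mk]
    simp only [hQdef, hFdef]
    ring
  have hQI : IntegrableOn Qr (Set.univ ×ˢ Set.Icc a b) volume :=
    (hQc.integrable_of_hasCompactSupport hQs).restrict
  have hFI : IntegrableOn F (Set.univ ×ˢ Set.Icc a b) volume :=
    (hFc.integrable_of_hasCompactSupport hFs).restrict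
  have hQeq : (∫ p in Set.univ ×ˢ Set.Icc a b, ‖Dx η p‖ ^ 2 + ‖Dz η p‖ ^ 2) =
      ∫ p in Set.univ ×ˢ Set.Icc a b, Qr p :=
    integral_congr_ae (Filter.Eventually.of_forall fun p => hi p)
  calc (∫ p in Set.univ ×ˢ Set.Icc a b, ‖dbar η p‖ ^ 2)
      = ∫ p in Set.univ ×ˢ Set.Icc a b, ((1/4) * Qr p + (1/2) * F p) :=
        integral_congr_ae (Filter.Eventually.of_forall fun p => hii p)
    _ = (∫ p in Set.univ ×ˢ Set.Icc a b, (1/4) * Qr p) +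
        ∫ p in Set.univ ×ˢ Set.Icc a b, (1/2) * F p :=
        integral_add (hQI.const_mul _) (hFI.const_mul _)
    _ = (1/4) * (∫ p in Set.univ ×ˢ Set.Icc a b, Qr p) +
        (1/2) * ∫ p in Set.univ ×ˢ Set.Icc a b, F p := by
        rw [integral_const_mul, integral_const_mul]
    _ = (1/4) * (∫ p in Set.univ ×ˢ Set.Icc a b, ‖Dx η p‖ ^ 2 + ‖Dz η p‖ ^ 2) +
        (1/2) * ∫ x : ℝ, (ζ (x, a) * px φ (x, a) - ζ (x, b) * px φ (x, b)) := by
        rw [hQeq, ← strip_integral a b hab φ ζ hφ hζ hφs hζs]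

/-- The energy identity `‖∂̄η₊‖² + ‖∂̄η₋‖² = ¼‖dη₊‖² + ¼‖dη₋‖²` for pairs of smooth, compactly
supported functions on the strips `ℝ × [z₁, z₂]` and `ℝ × [z₀, z₁]` obeying the coupled
boundary condition at `z = z₁` (and whose `φ`-components vanish on the outer boundaries,
as required of elements in the dense domain of the relevant Hilbert space). -/
theorem energy_identity
    (z₀ z₁ z₂ τ : ℝ) (hz0 : 0 < z₀) (h01 : z₀ < z₁) (h12 : z₁ < z₂)
    (hτ : τ ∈ Set.Icc (0 : ℝ) 1)
    (φp ζp φm ζm : ℝ × ℝ → ℝ)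
    (hφp : ContDiff ℝ (⊤ : ℕ∞) φp) (hζp : ContDiff ℝ (⊤ : ℕ∞) ζp)
    (hφm : ContDiff ℝ (⊤ : ℕ∞) φm) (hζm : ContDiff ℝ (⊤ : ℕ∞) ζm)
    (hφps : HasCompactSupport φp) (hζps : HasCompactSupport ζp)
    (hφms : HasCompactSupport φm) (hζms : HasCompactSupport ζm)
    (hmatch : ∀ x : ℝ, ζp (x, z₁) = τ * ζm (x, z₁) ∧ τ * φp (x, z₁) = φm (x, z₁))
    (htop : ∀ x : ℝ, φp (x, z₂) = 0) (hbot : ∀ x : ℝ, φm (x, z₀) = 0)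
    (ηp ηm : ℝ × ℝ → ℂ)
    (hηp : ∀ p : ℝ × ℝ, ηp p = (φp p : ℂ) + (ζp p : ℂ) * Complex.I)
    (hηm : ∀ p : ℝ × ℝ, ηm p = (φm p : ℂ) + (ζm p : ℂ) * Complex.I) :
    (∫ p in Set.univ ×ˢ Set.Icc z₁ z₂, ‖dbar ηp p‖ ^ 2) +
      (∫ p in Set.univ ×ˢ Set.Icc z₀ z₁, ‖dbar ηm p‖ ^ 2) =
    (1 / 4) * (∫ p in Set.univ ×ˢ Set.Icc z₁ z₂, ‖Dx ηp p‖ ^ 2 + ‖Dz ηp p‖ ^ 2) +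
      (1 / 4) * (∫ p in Set.univ ×ˢ Set.Icc z₀ z₁, ‖Dx ηm p‖ ^ 2 + ‖Dz ηm p‖ ^ 2) := by
  rw [strip_energy z₁ z₂ h12.le φp ζp hφp hζp hφps hζps ηp hηp,
      strip_energy z₀ z₁ h01.le φm ζm hφm hζm hφms hζms ηm hηm]
  have hBp : ∀ x : ℝ, px φp (x, z₂) = 0 := by
    intro x
    have h := slice_x hφp z₂ x
    rw [show (fun x => φp (x, z₂)) = (fun _ : ℝ => (0:ℝ)) from funext htop] at h
    exact h.unique (hasDerivAt_const x 0)
  have hBm : ∀ x : ℝ, px φm (x, z₀) = 0 := by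
    intro x
    have h := slice_x hφm z₀ x
    rw [show (fun x => φm (x, z₀)) = (fun _ : ℝ => (0:ℝ)) from funext hbot] at h
    exact h.unique (hasDerivAt_const x 0)
  have hBmatch : ∀ x : ℝ, px φm (x, z₁) = τ * px φp (x, z₁) := by
    intro x
    have h := slice_x hφm z₁ x
    rw [show (fun x => φm (x, z₁)) = (fun x => τ * φp (x, z₁)) from
      funext fun x => ((hmatch x).2).symm] at h
    exact h.unique ((slice_x hφp z₁ x).const_mul τ)
  -- boundary integrands
  set Bp : ℝ → ℝ := fun x => ζp (x, z₁) * px φp (x, z₁) - ζp (x, z₂) * px φp (x, z₂) with hBpdef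
  set Bm : ℝ → ℝ := fun x => ζm (x, z₀) * px φm (x, z₀) - ζm (x, z₁) * px φm (x, z₁) with hBmdef
  have hGp : HasCompactSupport (fun p : ℝ × ℝ => ζp p * px φp p) := hζps.mul_right
  have hGm : HasCompactSupport (fun p : ℝ × ℝ => ζm p * px φm p) := hζms.mul_right
  have hGpc : Continuous (fun p : ℝ × ℝ => ζp p * px φp p) :=
    hζp.continuous.mul (contDiff_px hφp).continuous
  have hGmc : Continuous (fun p : ℝ × ℝ => ζm p * px φm p) :=
    hζm.continuous.mul (contDiff_px hφm).continuous
  have hBpI : Integrable Bp := by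
    have : Bp = (fun x => ζp (x, z₁) * px φp (x, z₁)) - (fun x => ζp (x, z₂) * px φp (x, z₂)) := rfl
    rw [this]
    exact ((Continuous.comp hGpc (by fun_prop)).integrable_of_hasCompactSupport
        (slice_hcs_x hGp z₁)).sub
      ((Continuous.comp hGpc (by fun_prop)).integrable_of_hasCompactSupport (slice_hcs_x hGp z₂))
  have hBmI : Integrable Bm := by
    have : Bm = (fun x => ζm (x, z₀) * px φm (x, z₀)) - (fun x => ζm (x, z₁) * px φm (x, z₁)) := rfl
    rw [this]
    exact ((Continuous.comp hGmc (by fun_prop)).integrable_of_hasCompactSupport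
        (slice_hcs_x hGm z₀)).sub
      ((Continuous.comp hGmc (by fun_prop)).integrable_of_hasCompactSupport (slice_hcs_x hGm z₁))
  have hzero : (∫ x : ℝ, Bp x) + (∫ x : ℝ, Bm x) = 0 := by
    rw [← integral_add hBpI hBmI]
    have : ∀ x : ℝ, Bp x + Bm x = 0 := by
      intro x
      simp only [hBpdef, hBmdef]
      rw [hBp x, hBm x, hBmatch x, (hmatch x).1]
      ring
    simp only [this, integral_zero]
  linarith [hzero]
end

section
/- If Q(φ, ζ) = 0 for a pair in the admissible domain, then φ ≡ 0 and ζ ≡ 0. Consequently there is a constant c > 0 with Q(φ, ζ) ≥ c ∫_I (φ² + ζ²) for all admissible pairs. -/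
open intervalIntegral in
lemma cs_aux (f : ℝ → ℝ) (a b : ℝ) (hab : a ≤ b) (hf : ContinuousOn f (Set.Icc a b)) :
    (∫ u in a..b, |f u|) ^ 2 ≤ (b - a) * ∫ u in a..b, (f u) ^ 2 := by
  have huI : Set.uIcc a b = Set.Icc a b := Set.uIcc_of_le hab
  have hi1 : IntervalIntegrable (fun u => |f u|) MeasureTheory.volume a b :=
    ContinuousOn.intervalIntegrable (huI ▸ hf.abs)
  have hi2 : IntervalIntegrable (fun u => (f u) ^ 2) MeasureTheory.volume a b :=
    ContinuousOn.intervalIntegrable (huI ▸ hf.pow 2)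
  rcases eq_or_lt_of_le hab with rfl | hab'
  · simp
  set L := b - a with hL
  have hL0 : 0 < L := by simp only [hL]; linarith
  set S := ∫ u in a..b, |f u| with hS
  set c := S / L with hc
  have key : 0 ≤ ∫ u in a..b, (c - |f u|) ^ 2 :=
    integral_nonneg hab (fun u _ => sq_nonneg _)
  have expand : (∫ u in a..b, (c - |f u|) ^ 2)
      = c ^ 2 * L - 2 * c * S + ∫ u in a..b, (f u) ^ 2 := by
    have hpt : ∀ u, (c - |f u|) ^ 2 = c ^ 2 - (2 * c) * |f u| + (f u) ^ 2 := by
      intro u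
      nlinarith [sq_abs (f u)]
    calc (∫ u in a..b, (c - |f u|) ^ 2)
        = ∫ u in a..b, (c ^ 2 - (2 * c) * |f u| + (f u) ^ 2) :=
          integral_congr (fun u _ => hpt u)
      _ = (∫ u in a..b, (c ^ 2 - (2 * c) * |f u|)) + ∫ u in a..b, (f u) ^ 2 := by
          refine integral_add ?_ hi2
          exact (_root_.intervalIntegrable_const).sub (hi1.const_mul _)
      _ = ((∫ u in a..b, (c ^ 2 : ℝ)) - ∫ u in a..b, (2 * c) * |f u|) + ∫ u in a..b, (f u) ^ 2 := by
          rw [integral_sub _root_.intervalIntegrable_const (hi1.const_mul _)]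
      _ = c ^ 2 * L - 2 * c * S + ∫ u in a..b, (f u) ^ 2 := by
          rw [integral_const, integral_const_mul]
          simp [hL, hS, smul_eq_mul, mul_comm]
  rw [expand] at key
  have hcS : c * L = S := by rw [hc, div_mul_cancel₀ S hL0.ne']
  nlinarith [sq_nonneg (c * L - S)]

open intervalIntegral in
lemma zero_of_integral_zero (h : ℝ → ℝ) (hc : Continuous h) (hn : ∀ u, 0 ≤ h u) (a b : ℝ)
    (hab : a < b) (hI : (∫ u in a..b, h u) = 0) : ∀ u ∈ Set.Icc a b, h u = 0 := by
  intro u hu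
  by_contra hne
  have hu0 : 0 < h u := lt_of_le_of_ne (hn u) (Ne.symm hne)
  obtain ⟨δ, hδ0, hδ⟩ : ∃ δ > 0, ∀ v, |v - u| < δ → h u / 2 < h v := by
    have := hc.continuousAt (x := u)
    rw [Metric.continuousAt_iff] at this
    obtain ⟨δ, hδ0, hδ⟩ := this (h u / 2) (by linarith)
    exact ⟨δ, hδ0, fun v hv => by
      have := hδ (show dist v u < δ by simpa [Real.dist_eq] using hv)
      rw [Real.dist_eq] at this
      cases' abs_lt.1 this with h1 h2
      linarith⟩
  set c := max a (u - δ) with hcdef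
  set d := min b (u + δ) with hddef
  have hcd : c < d := by
    rcases hu with ⟨hua, hub⟩
    apply max_lt <;> [skip; skip] <;> apply lt_min <;> linarith
  have hpos : 0 < ∫ v in c..d, h v := by
    apply intervalIntegral_pos_of_pos_on (hc.intervalIntegrable c d) _ hcd
    intro x hx
    refine lt_trans (by linarith) (hδ x ?_)
    rw [abs_lt]
    rcases hx with ⟨h1, h2⟩
    constructor
    · have h3 : u - δ ≤ c := le_max_right _ _
      linarith
    · have h4 : d ≤ u + δ := min_le_right _ _
      linarith
  have hle : (∫ v in c..d, h v) ≤ ∫ v in a..b, h v := by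
    apply integral_mono_interval (le_max_left _ _) hcd.le (min_le_left _ _)
      (MeasureTheory.ae_of_all _ (fun x => hn x)) (hc.intervalIntegrable a b)
  rw [hI] at hle
  linarith

set_option maxHeartbeats 1000000 in
open intervalIntegral MeasureTheory Set in
lemma coercive_core
    (u₀ u₁ : ℝ) (h01 : u₀ < u₁)
    (a₁ a₂ bf : ℝ → ℝ)
    (ha₁c : ContinuousOn a₁ (Set.Icc u₀ u₁)) (ha₂c : ContinuousOn a₂ (Set.Icc u₀ u₁))
    (ha₁ : ∀ u ∈ Set.Icc u₀ u₁, 0 < a₁ u) (ha₂ : ∀ u ∈ Set.Icc u₀ u₁, 0 < a₂ u)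
    (hbc : ContinuousOn bf (Set.Icc u₀ u₁))
    (hb : (∫ u in u₀..u₁, bf u) ≠ 0) :
    ∃ c : ℝ, 0 < c ∧ ∀ φ ζ : ℝ → ℝ, ContDiff ℝ 1 φ → ContDiff ℝ 1 ζ →
        φ u₀ = 0 → φ u₁ = 0 →
        c * (∫ u in u₀..u₁, ((φ u) ^ 2 + (ζ u) ^ 2)) ≤
          ∫ u in u₀..u₁, ((a₁ u)⁻¹ * (deriv ζ u) ^ 2
            + (a₂ u)⁻¹ * (deriv φ u + bf u * ζ u) ^ 2) := by
  have hle : u₀ ≤ u₁ := h01.le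
  have huI : Set.uIcc u₀ u₁ = Set.Icc u₀ u₁ := Set.uIcc_of_le hle
  set L : ℝ := u₁ - u₀ with hLdef
  have hL : 0 < L := by simp only [hLdef]; linarith
  have hne : (Set.Icc u₀ u₁).Nonempty := Set.nonempty_Icc.2 hle
  -- bound on |bf|
  obtain ⟨tB, htB, hBmax⟩ := isCompact_Icc.exists_isMaxOn hne hbc.abs
  set B : ℝ := |bf tB| with hBdef
  have hB : ∀ u ∈ Set.Icc u₀ u₁, |bf u| ≤ B := fun u hu => hBmax hu
  have hB0 : 0 ≤ B := abs_nonneg _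
  -- bounds on a₁ a₂
  obtain ⟨t₁, ht₁, hM₁max⟩ := isCompact_Icc.exists_isMaxOn hne ha₁c
  obtain ⟨t₂, ht₂, hM₂max⟩ := isCompact_Icc.exists_isMaxOn hne ha₂c
  set M₁ : ℝ := a₁ t₁ with hM₁def
  set M₂ : ℝ := a₂ t₂ with hM₂def
  have hM₁0 : 0 < M₁ := ha₁ t₁ ht₁
  have hM₂0 : 0 < M₂ := ha₂ t₂ ht₂
  set m : ℝ := min M₁⁻¹ M₂⁻¹ with hmdef
  have hm : 0 < m := lt_min (inv_pos.2 hM₁0) (inv_pos.2 hM₂0)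
  have hm₁ : ∀ u ∈ Set.Icc u₀ u₁, m ≤ (a₁ u)⁻¹ := by
    intro u hu
    refine le_trans (min_le_left _ _) ?_
    exact inv_anti₀ (ha₁ u hu) (hM₁max hu)
  have hm₂ : ∀ u ∈ Set.Icc u₀ u₁, m ≤ (a₂ u)⁻¹ := by
    intro u hu
    refine le_trans (min_le_right _ _) ?_
    exact inv_anti₀ (ha₂ u hu) (hM₂max hu)
  set βa : ℝ := |∫ u in u₀..u₁, bf u| with hβdef
  have hβa : 0 < βa := abs_pos.2 hb
  set D : ℝ := (1 + L * B) / βa + 1 with hDdef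
  have hD1 : 1 ≤ D := by
    have h : 0 ≤ (1 + L * B) / βa :=
      div_nonneg (by linarith only [mul_nonneg hL.le hB0]) hβa.le
    rw [hDdef]; linarith only [h]
  have hD0 : 0 ≤ D := by linarith only [hD1]
  set E : ℝ := 1 + L * B * D with hEdef
  have hE1 : 1 ≤ E := by
    have h : 0 ≤ L * B * D := mul_nonneg (mul_nonneg hL.le hB0) hD0
    rw [hEdef]; linarith only [h]
  set K : ℝ := 2 * L ^ 2 * (D ^ 2 + E ^ 2) with hKdef
  have hK : 0 < K := by positivity
  refine ⟨m / K, div_pos hm hK, ?_⟩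
  intro φ ζ hφ hζ hφ0 hφ1
  have hφd : ∀ x, DifferentiableAt ℝ φ x := fun x => (hφ.differentiable one_ne_zero).differentiableAt
  have hζd : ∀ x, DifferentiableAt ℝ ζ x := fun x => (hζ.differentiable one_ne_zero).differentiableAt
  have hfc : Continuous (deriv ζ) := hζ.continuous_deriv le_rfl
  have hdφc : Continuous (deriv φ) := hφ.continuous_deriv le_rfl
  set g : ℝ → ℝ := fun u => deriv φ u + bf u * ζ u with hgdef
  have hgc : ContinuousOn g (Set.Icc u₀ u₁) :=
    hdφc.continuousOn.add (hbc.mul (hζ.continuous.continuousOn))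
  have hgI : IntervalIntegrable g volume u₀ u₁ :=
    ContinuousOn.intervalIntegrable (huI ▸ hgc)
  have hgaI : IntervalIntegrable (fun u => |g u|) volume u₀ u₁ :=
    ContinuousOn.intervalIntegrable (huI ▸ hgc.abs)
  have hg2I : IntervalIntegrable (fun u => (g u) ^ 2) volume u₀ u₁ :=
    ContinuousOn.intervalIntegrable (huI ▸ hgc.pow 2)
  set Sf : ℝ := ∫ u in u₀..u₁, |deriv ζ u| with hSfdef
  set Sg : ℝ := ∫ u in u₀..u₁, |g u| with hSgdef
  set Z : ℝ := ∫ u in u₀..u₁, (deriv ζ u) ^ 2 with hZdef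
  set G : ℝ := ∫ u in u₀..u₁, (g u) ^ 2 with hGdef
  set P : ℝ := Sf + Sg with hPdef
  have hSf0 : 0 ≤ Sf := integral_nonneg hle fun u _ => abs_nonneg _
  have hSg0 : 0 ≤ Sg := integral_nonneg hle fun u _ => abs_nonneg _
  have hZ0 : 0 ≤ Z := integral_nonneg hle fun u _ => sq_nonneg _
  have hG0 : 0 ≤ G := integral_nonneg hle fun u _ => sq_nonneg _
  have hP0 : 0 ≤ P := by positivity
  have hCSf : Sf ^ 2 ≤ L * Z := by
    rw [hLdef]; exact cs_aux _ _ _ hle hfc.continuousOn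
  have hCSg : Sg ^ 2 ≤ L * G := by
    rw [hLdef]; exact cs_aux _ _ _ hle hgc
  -- FTC for ζ
  have hftcζ : ∀ u ∈ Set.Icc u₀ u₁, ζ u - ζ u₀ = ∫ t in u₀..u, deriv ζ t := fun u hu =>
    (integral_deriv_eq_sub (fun x _ => hζd x) (hfc.intervalIntegrable u₀ u)).symm
  have hζdev : ∀ u ∈ Set.Icc u₀ u₁, |ζ u - ζ u₀| ≤ Sf := by
    intro u hu
    rw [hftcζ u hu]
    calc |∫ t in u₀..u, deriv ζ t| ≤ ∫ t in u₀..u, |deriv ζ t| :=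
          abs_integral_le_integral_abs hu.1
      _ ≤ Sf := integral_mono_interval le_rfl hu.1 hu.2
          (ae_of_all _ fun x => abs_nonneg _) ((hfc.abs).intervalIntegrable u₀ u₁)
  -- ∫ g = ∫ bf ζ
  have hbζI : IntervalIntegrable (fun u => bf u * ζ u) volume u₀ u₁ :=
    ContinuousOn.intervalIntegrable (huI ▸ hbc.mul hζ.continuous.continuousOn)
  have hgsplit : (∫ u in u₀..u₁, g u) = ∫ u in u₀..u₁, bf u * ζ u := by
    have h1 : IntervalIntegrable (deriv φ) volume u₀ u₁ := hdφc.intervalIntegrable _ _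
    rw [hgdef]
    rw [integral_add h1 hbζI, integral_deriv_eq_sub (fun x _ => hφd x) h1, hφ1, hφ0]
    ring
  -- split ∫ bf ζ
  have hzdI : IntervalIntegrable (fun u => bf u * (ζ u - ζ u₀)) volume u₀ u₁ :=
    ContinuousOn.intervalIntegrable
      (huI ▸ hbc.mul ((hζ.continuous.continuousOn).sub continuousOn_const))
  have hbzeta : (∫ u in u₀..u₁, bf u * ζ u)
      = ζ u₀ * (∫ u in u₀..u₁, bf u) + ∫ u in u₀..u₁, bf u * (ζ u - ζ u₀) := by
    have hbI : IntervalIntegrable bf volume u₀ u₁ :=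
      ContinuousOn.intervalIntegrable (huI ▸ hbc)
    calc (∫ u in u₀..u₁, bf u * ζ u)
        = ∫ u in u₀..u₁, (ζ u₀ * bf u + bf u * (ζ u - ζ u₀)) :=
          integral_congr (fun u _ => by ring)
      _ = (∫ u in u₀..u₁, ζ u₀ * bf u) + ∫ u in u₀..u₁, bf u * (ζ u - ζ u₀) :=
          integral_add (hbI.const_mul _) hzdI
      _ = ζ u₀ * (∫ u in u₀..u₁, bf u) + ∫ u in u₀..u₁, bf u * (ζ u - ζ u₀) := by
          rw [intervalIntegral.integral_const_mul]
  have habs2 : |∫ u in u₀..u₁, bf u * (ζ u - ζ u₀)| ≤ L * (B * Sf) := by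
    calc |∫ u in u₀..u₁, bf u * (ζ u - ζ u₀)|
        ≤ ∫ u in u₀..u₁, |bf u * (ζ u - ζ u₀)| := abs_integral_le_integral_abs hle
      _ ≤ ∫ u in u₀..u₁, (B * Sf : ℝ) := by
          refine integral_mono_on hle
            (ContinuousOn.intervalIntegrable (huI ▸
              (hbc.mul ((hζ.continuous.continuousOn).sub continuousOn_const)).abs))
            intervalIntegrable_const ?_
          intro x hx
          rw [abs_mul]
          exact mul_le_mul (hB x hx) (hζdev x hx) (abs_nonneg _) hB0
      _ = L * (B * Sf) := by rw [intervalIntegral.integral_const]; simp [hLdef, smul_eq_mul]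
  have hζ0b : |ζ u₀| ≤ (Sg + L * (B * Sf)) / βa := by
    rw [le_div_iff₀ hβa]
    have h1 : ζ u₀ * (∫ u in u₀..u₁, bf u)
        = (∫ u in u₀..u₁, g u) - ∫ u in u₀..u₁, bf u * (ζ u - ζ u₀) := by
      rw [hgsplit, hbzeta]; ring
    have h2 : |ζ u₀ * (∫ u in u₀..u₁, bf u)| ≤ Sg + L * (B * Sf) := by
      rw [h1]
      have hga : |∫ u in u₀..u₁, g u| ≤ Sg := abs_integral_le_integral_abs hle
      exact le_trans (abs_sub _ _) (add_le_add hga habs2)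
    calc |ζ u₀| * βa = |ζ u₀ * (∫ u in u₀..u₁, bf u)| := by rw [abs_mul, hβdef]
      _ ≤ Sg + L * (B * Sf) := h2
  have hζbound : ∀ u ∈ Set.Icc u₀ u₁, |ζ u| ≤ D * P := by
    intro u hu
    have h1 : |ζ u| ≤ |ζ u₀| + |ζ u - ζ u₀| := by
      have := abs_add_le (ζ u₀) (ζ u - ζ u₀); simpa using this
    have h2 := hζdev u hu
    have h3 := hζ0b
    have hSfP : Sf ≤ P := by rw [hPdef]; linarith only [hSg0]
    have hSgP : Sg ≤ P := by rw [hPdef]; linarith only [hSf0]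
    have hLB : 0 ≤ L * B := mul_nonneg hL.le hB0
    have h9 : L * B * Sf ≤ L * B * P := mul_le_mul_of_nonneg_left hSfP hLB
    have hkey : (Sg + L * (B * Sf)) / βa ≤ ((1 + L * B) * P) / βa :=
      div_le_div_of_nonneg_right (by linarith only [hSgP, h9]) hβa.le
    have hDP : D * P = ((1 + L * B) * P) / βa + P := by rw [hDdef]; ring
    rw [hDP]
    linarith [h1, h2, h3, hkey, hSfP]
  -- bound on φ
  have hφbound : ∀ u ∈ Set.Icc u₀ u₁, |φ u| ≤ E * P := by
    intro u hu
    have hftc : φ u = ∫ t in u₀..u, deriv φ t := by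
      rw [integral_deriv_eq_sub (fun x _ => hφd x) (hdφc.intervalIntegrable u₀ u), hφ0, sub_zero]
    have hsubset : Set.Icc u₀ u ⊆ Set.Icc u₀ u₁ := Set.Icc_subset_Icc le_rfl hu.2
    have hptw : ∀ t ∈ Set.Icc u₀ u, |deriv φ t| ≤ |g t| + B * (D * P) := by
      intro t ht
      have ht' := hsubset ht
      have : deriv φ t = g t - bf t * ζ t := by rw [hgdef]; ring
      rw [this]
      refine le_trans (abs_sub _ _) ?_
      gcongr
      rw [abs_mul]
      exact mul_le_mul (hB t ht') (hζbound t ht') (abs_nonneg _) hB0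
    have hint1 : (∫ t in u₀..u, |deriv φ t|)
        ≤ ∫ t in u₀..u, (|g t| + B * (D * P)) := by
      refine integral_mono_on hu.1 ((hdφc.abs).intervalIntegrable u₀ u)
        ?_ hptw
      refine IntervalIntegrable.add ?_ intervalIntegrable_const
      exact ContinuousOn.intervalIntegrable ((Set.uIcc_of_le hu.1) ▸ (hgc.mono hsubset).abs)
    have hint2 : (∫ t in u₀..u, (|g t| + B * (D * P)))
        = (∫ t in u₀..u, |g t|) + (u - u₀) * (B * (D * P)) := by
      rw [integral_add (ContinuousOn.intervalIntegrable ((Set.uIcc_of_le hu.1) ▸ (hgc.mono hsubset).abs))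
        intervalIntegrable_const, intervalIntegral.integral_const]
      simp [smul_eq_mul]
    have hint3 : (∫ t in u₀..u, |g t|) ≤ Sg :=
      integral_mono_interval le_rfl hu.1 hu.2 (ae_of_all _ fun x => abs_nonneg _) hgaI
    have hBDP : 0 ≤ B * (D * P) := by positivity
    have h4 : (u - u₀) * (B * (D * P)) ≤ L * (B * (D * P)) := by
      apply mul_le_mul_of_nonneg_right _ hBDP
      rw [hLdef]; linarith only [hu.2]
    have h5 : |φ u| ≤ ∫ t in u₀..u, |deriv φ t| := by
      rw [hftc]; exact abs_integral_le_integral_abs hu.1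
    have hSgP : Sg ≤ P := by rw [hPdef]; linarith only [hSf0]
    have hEP : E * P = P + L * (B * (D * P)) := by rw [hEdef]; ring
    calc |φ u| ≤ ∫ t in u₀..u, |deriv φ t| := h5
      _ ≤ ∫ t in u₀..u, (|g t| + B * (D * P)) := hint1
      _ = (∫ t in u₀..u, |g t|) + (u - u₀) * (B * (D * P)) := hint2
      _ ≤ Sg + L * (B * (D * P)) := add_le_add hint3 h4
      _ ≤ E * P := by rw [hEP]; linarith only [hSgP]
    -- integral bound on φ² + ζ²
  set I : ℝ := ∫ u in u₀..u₁, ((φ u) ^ 2 + (ζ u) ^ 2) with hIdef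
  have hIb : I ≤ L * ((E * P) ^ 2 + (D * P) ^ 2) := by
    have hmono : I ≤ ∫ u in u₀..u₁, (((E * P) ^ 2 + (D * P) ^ 2 : ℝ)) := by
      refine integral_mono_on hle ?_ intervalIntegrable_const ?_
      · exact ((hφ.continuous.pow 2).add (hζ.continuous.pow 2)).intervalIntegrable u₀ u₁
      · intro u hu
        have h1 : (φ u) ^ 2 ≤ (E * P) ^ 2 := by
          calc (φ u) ^ 2 = |φ u| ^ 2 := (sq_abs _).symm
            _ ≤ (E * P) ^ 2 := pow_le_pow_left₀ (abs_nonneg _) (hφbound u hu) 2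
        have h2 : (ζ u) ^ 2 ≤ (D * P) ^ 2 := by
          calc (ζ u) ^ 2 = |ζ u| ^ 2 := (sq_abs _).symm
            _ ≤ (D * P) ^ 2 := pow_le_pow_left₀ (abs_nonneg _) (hζbound u hu) 2
        linarith only [h1, h2]
    calc I ≤ ∫ u in u₀..u₁, (((E * P) ^ 2 + (D * P) ^ 2 : ℝ)) := hmono
      _ = L * ((E * P) ^ 2 + (D * P) ^ 2) := by
          rw [intervalIntegral.integral_const]; simp [hLdef, smul_eq_mul]
  -- lower bound on Q
  have hQint : IntervalIntegrable (fun u => (a₁ u)⁻¹ * (deriv ζ u) ^ 2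
      + (a₂ u)⁻¹ * (deriv φ u + bf u * ζ u) ^ 2) volume u₀ u₁ := by
    apply ContinuousOn.intervalIntegrable
    rw [huI]
    exact ((ha₁c.inv₀ (fun u hu => (ha₁ u hu).ne')).mul (hfc.continuousOn.pow 2)).add
      (((ha₂c.inv₀ (fun u hu => (ha₂ u hu).ne')).mul
        ((hdφc.continuousOn.add (hbc.mul hζ.continuous.continuousOn)).pow 2)))
  have hf2I : IntervalIntegrable (fun u => (deriv ζ u) ^ 2) volume u₀ u₁ :=
    (hfc.pow 2).intervalIntegrable u₀ u₁
  have hlow : m * Z + m * G ≤ ∫ u in u₀..u₁, ((a₁ u)⁻¹ * (deriv ζ u) ^ 2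
      + (a₂ u)⁻¹ * (deriv φ u + bf u * ζ u) ^ 2) := by
    have heq : m * Z + m * G
        = ∫ u in u₀..u₁, (m * (deriv ζ u) ^ 2 + m * (g u) ^ 2) := by
      rw [integral_add (hf2I.const_mul m) (hg2I.const_mul m),
        intervalIntegral.integral_const_mul, intervalIntegral.integral_const_mul]
    rw [heq]
    refine integral_mono_on hle ((hf2I.const_mul m).add (hg2I.const_mul m)) hQint ?_
    intro u hu
    have h1 : m * (deriv ζ u) ^ 2 ≤ (a₁ u)⁻¹ * (deriv ζ u) ^ 2 :=
      mul_le_mul_of_nonneg_right (hm₁ u hu) (sq_nonneg _)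
    have h2 : m * (g u) ^ 2 ≤ (a₂ u)⁻¹ * (deriv φ u + bf u * ζ u) ^ 2 := by
      have : g u = deriv φ u + bf u * ζ u := by rw [hgdef]
      rw [this]
      exact mul_le_mul_of_nonneg_right (hm₂ u hu) (sq_nonneg _)
    linarith only [h1, h2]
  -- combine
  have hP2 : P ^ 2 ≤ 2 * (Sf ^ 2 + Sg ^ 2) := by
    have h : P ^ 2 = Sf ^ 2 + 2 * Sf * Sg + Sg ^ 2 := by rw [hPdef]; ring
    have h' : 2 * Sf * Sg ≤ Sf ^ 2 + Sg ^ 2 := two_mul_le_add_sq Sf Sg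
    linarith only [h, h']
  have hED : (0:ℝ) ≤ L * (E ^ 2 + D ^ 2) :=
    mul_nonneg hL.le (by positivity)
  have hIK : I ≤ K * (Z + G) := by
    have s1 : L * ((E * P) ^ 2 + (D * P) ^ 2) = (L * (E ^ 2 + D ^ 2)) * P ^ 2 := by ring
    have s2 : (L * (E ^ 2 + D ^ 2)) * P ^ 2
        ≤ (L * (E ^ 2 + D ^ 2)) * (2 * (Sf ^ 2 + Sg ^ 2)) :=
      mul_le_mul_of_nonneg_left hP2 hED
    have s3 : (L * (E ^ 2 + D ^ 2)) * (2 * (Sf ^ 2 + Sg ^ 2))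
        ≤ (L * (E ^ 2 + D ^ 2)) * (2 * (L * Z + L * G)) :=
      mul_le_mul_of_nonneg_left (by linarith only [hCSf, hCSg]) hED
    have s4 : (L * (E ^ 2 + D ^ 2)) * (2 * (L * Z + L * G)) = K * (Z + G) := by
      rw [hKdef]; ring
    linarith only [hIb, s1, s2, s3, s4]
  have t1 : (m / K) * I ≤ (m / K) * (K * (Z + G)) :=
    mul_le_mul_of_nonneg_left hIK (div_nonneg hm.le hK.le)
  have t2 : (m / K) * (K * (Z + G)) = m * Z + m * G := by
    field_simp
  calc (m / K) * I ≤ (m / K) * (K * (Z + G)) := t1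
    _ = m * Z + m * G := t2
    _ ≤ _ := hlow

/-- If the quadratic form `Q(φ,ζ) = ∫ a₁⁻¹ (ζ′)² + a₂⁻¹ (φ′ + b ζ)²` vanishes on an admissible
pair (`C¹`, with `φ` vanishing at both endpoints), the pair vanishes; consequently `Q` is
coercive: `Q(φ,ζ) ≥ c ∫ (φ² + ζ²)` for some `c > 0` and all admissible pairs. -/
theorem quadratic_form_vanishing_and_coercive
    (u₀ u₁ : ℝ) (h01 : u₀ < u₁)
    (a₁ a₂ bf : ℝ → ℝ)
    (ha₁c : ContinuousOn a₁ (Set.Icc u₀ u₁)) (ha₂c : ContinuousOn a₂ (Set.Icc u₀ u₁))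
    (ha₁ : ∀ u ∈ Set.Icc u₀ u₁, 0 < a₁ u) (ha₂ : ∀ u ∈ Set.Icc u₀ u₁, 0 < a₂ u)
    (hbc : ContinuousOn bf (Set.Icc u₀ u₁))
    (hb : (∫ u in u₀..u₁, bf u) ≠ 0) :
    (∀ φ ζ : ℝ → ℝ, ContDiff ℝ 1 φ → ContDiff ℝ 1 ζ →
        φ u₀ = 0 → φ u₁ = 0 →
        (∫ u in u₀..u₁, ((a₁ u)⁻¹ * (deriv ζ u) ^ 2
            + (a₂ u)⁻¹ * (deriv φ u + bf u * ζ u) ^ 2)) = 0 →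
        ∀ u ∈ Set.Icc u₀ u₁, φ u = 0 ∧ ζ u = 0) ∧
    ∃ c : ℝ, 0 < c ∧ ∀ φ ζ : ℝ → ℝ, ContDiff ℝ 1 φ → ContDiff ℝ 1 ζ →
        φ u₀ = 0 → φ u₁ = 0 →
        c * (∫ u in u₀..u₁, ((φ u) ^ 2 + (ζ u) ^ 2)) ≤
          ∫ u in u₀..u₁, ((a₁ u)⁻¹ * (deriv ζ u) ^ 2
            + (a₂ u)⁻¹ * (deriv φ u + bf u * ζ u) ^ 2) := by
  obtain ⟨c, hc, key⟩ := coercive_core u₀ u₁ h01 a₁ a₂ bf ha₁c ha₂c ha₁ ha₂ hbc hb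
  refine ⟨?_, c, hc, key⟩
  intro φ ζ hφ hζ hφ0 hφ1 hQ u hu
  have h1 := key φ ζ hφ hζ hφ0 hφ1
  rw [hQ] at h1
  have hIpos : 0 ≤ ∫ u in u₀..u₁, ((φ u) ^ 2 + (ζ u) ^ 2) :=
    intervalIntegral.integral_nonneg h01.le (fun u _ => by positivity)
  have hI0 : (∫ u in u₀..u₁, ((φ u) ^ 2 + (ζ u) ^ 2)) = 0 := by
    refine le_antisymm ?_ hIpos
    exact le_of_mul_le_mul_left (by simpa using h1) hc
  have hzero : (φ u) ^ 2 + (ζ u) ^ 2 = 0 := zero_of_integral_zero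
    (fun u => (φ u) ^ 2 + (ζ u) ^ 2)
    ((hφ.continuous.pow 2).add (hζ.continuous.pow 2))
    (fun u => by positivity) u₀ u₁ h01 hI0 u hu
  have h2 : (φ u) ^ 2 = 0 := by
    linarith only [hzero, sq_nonneg (φ u), sq_nonneg (ζ u)]
  have h3 : (ζ u) ^ 2 = 0 := by
    linarith only [hzero, sq_nonneg (φ u), sq_nonneg (ζ u)]
  exact ⟨pow_eq_zero_iff (two_ne_zero).symm.symm |>.mp h2,
    pow_eq_zero_iff (two_ne_zero).symm.symm |>.mp h3⟩
end

section
/- Let ζ be a real-valued function on the strip ℝ × [a, b] that is continuous, harmonic in the interior, converges to 0 uniformly as |x| → ∞, satisfies |ζ(x, a)| ≤ c for all x, and satisfies ∂_z ζ(x, b) ≤ R and −∂_z ζ(x, b) ≤ R for all x (i.e. |∂_z ζ| ≤ R on the top boundary). Then |ζ(x, z)| ≤ c + R(z − a) for all (x, z) in the strip. -/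
open Set Filter


lemma nonneg_of_top_max {f : ℝ → ℝ} {b d : ℝ}
    (hf : HasDerivWithinAt f d (Set.Iic b) b)
    (hmax : ∀ᶠ z in nhdsWithin b (Set.Iio b), f z ≤ f b) : 0 ≤ d := by
  rw [hasDerivWithinAt_iff_tendsto_slope] at hf
  have hs : Set.Iic b \ {b} = Set.Iio b := by
    ext y; simp [lt_iff_le_and_ne]
  rw [hs] at hf
  refine ge_of_tendsto hf ?_
  filter_upwards [hmax, self_mem_nhdsWithin] with z hz hz'
  have hz' : z < b := hz'
  rw [slope_def_field]
  rw [show (f z - f b) / (z - b) = (-(f z - f b)) / (-(z - b)) by rw [neg_div_neg_eq]]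
  exact div_nonneg (by linarith) (by linarith)

lemma secondDeriv_nonpos_of_localMax {g : ℝ → ℝ} {x0 m : ℝ}
    (hd : ∀ᶠ x in nhds x0, DifferentiableAt ℝ g x)
    (h2 : HasDerivAt (deriv g) m x0)
    (hmax : IsLocalMax g x0) : m ≤ 0 := by
  by_contra hm
  push_neg at hm
  have h0 : deriv g x0 = 0 := hmax.deriv_eq_zero
  have hslope := hasDerivAt_iff_tendsto_slope.mp h2
  have hev : ∀ᶠ x in nhdsWithin x0 {x0}ᶜ, 0 < slope (deriv g) x0 x :=
    hslope.eventually (eventually_gt_nhds hm)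
  obtain ⟨ε1, hε1, h1⟩ := Metric.eventually_nhds_iff.mp (hd.and hmax)
  obtain ⟨s, hs, hs'⟩ := hev.exists_mem
  obtain ⟨ε2, hε2, h2'⟩ := Metric.mem_nhdsWithin_iff.mp hs
  set r := min ε1 ε2 / 2 with hr
  have hrpos : 0 < r := by positivity
  have hr1 : r < ε1 := by
    have := min_le_left ε1 ε2; simp only [hr]; linarith
  have hr2 : r < ε2 := by
    have := min_le_right ε1 ε2; simp only [hr]; linarith
  -- deriv g positive on Ioo x0 (x0+r)
  have hpos : ∀ x ∈ Set.Ioo x0 (x0 + r), 0 < deriv g x := by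
    intro x hx
    have hxne : x ≠ x0 := ne_of_gt hx.1
    have hball : x ∈ Metric.ball x0 ε2 := by
      rw [Metric.mem_ball, Real.dist_eq, abs_of_pos (by linarith [hx.1] : (0:ℝ) < x - x0)]
      linarith [hx.2]
    have hsl : 0 < slope (deriv g) x0 x := hs' x (h2' ⟨hball, hxne⟩)
    rw [slope_def_field, h0, sub_zero] at hsl
    have hx0 : 0 < x - x0 := by linarith [hx.1]
    have := mul_pos hsl hx0
    rwa [div_mul_cancel₀] at this
    exact ne_of_gt hx0
  have hcont : ContinuousOn g (Set.Icc x0 (x0 + r)) := by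
    intro x hx
    have hdx : dist x x0 < ε1 := by
      rw [Real.dist_eq, abs_sub_lt_iff]
      constructor <;> nlinarith [hx.1, hx.2]
    exact (h1 hdx).1.continuousAt.continuousWithinAt
  have hmono := strictMonoOn_of_deriv_pos (convex_Icc x0 (x0 + r)) hcont ?_
  · have hlt : g x0 < g (x0 + r) := hmono (by simp [le_of_lt hrpos]) (by simp [le_of_lt hrpos]) (by linarith)
    have hdx : dist (x0 + r) x0 < ε1 := by
      rw [Real.dist_eq, abs_of_pos (by linarith : (0:ℝ) < x0 + r - x0)]
      linarith
    have : g (x0 + r) ≤ g x0 := (h1 hdx).2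
    linarith
  · intro x hx
    rw [interior_Icc] at hx
    exact hpos x hx

lemma strip_one_sided (a b c R : ℝ) (hab : a < b) (hc : 0 ≤ c) (hR : 0 ≤ R)
    (ζ : ℝ → ℝ → ℝ)
    (hcont : ContinuousOn (fun p : ℝ × ℝ => ζ p.1 p.2) (Set.univ ×ˢ Set.Icc a b))
    (hsmooth : ContDiffOn ℝ 2 (fun p : ℝ × ℝ => ζ p.1 p.2) (Set.univ ×ˢ Set.Ioo a b))
    (hharm : ∀ x z : ℝ, a < z → z < b →
      deriv (deriv (fun t => ζ t z)) x + deriv (deriv (fun t => ζ x t)) z = 0)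
    (hdecay : ∀ ε > (0 : ℝ), ∃ X : ℝ, ∀ x z : ℝ, X ≤ |x| → z ∈ Set.Icc a b → |ζ x z| ≤ ε)
    (hbot : ∀ x : ℝ, ζ x a ≤ c)
    (htop : ∀ x : ℝ, ∃ d : ℝ,
      HasDerivWithinAt (fun z => ζ x z) d (Set.Iic b) b ∧ d ≤ R) :
    ∀ x : ℝ, ∀ z ∈ Set.Icc a b, ζ x z ≤ c + R * (z - a) := by
  intro x0 z0 hz0
  refine le_of_forall_pos_le_add fun ε hε => ?_
  have hba : 0 < b - a := by linarith
  obtain ⟨ε', hε', hε'eq⟩ : ∃ e : ℝ, 0 < e ∧ e * (1 + (b - a)) = ε :=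
    ⟨ε / (1 + (b - a)), by positivity, by field_simp⟩
  obtain ⟨δ, hδ, hδ1, hδ2⟩ :
      ∃ d : ℝ, 0 < d ∧ d * (b - a) ^ 2 ≤ ε' / 4 ∧ d * (b - a) ≤ ε' / 4 := by
    refine ⟨ε' / (4 * ((b - a) + (b - a) ^ 2)), by positivity, ?_, ?_⟩ <;>
    · rw [div_mul_eq_mul_div, div_le_div_iff₀ (by positivity) (by norm_num)]
      nlinarith
  set Q : ℝ → ℝ := fun z => -(c + ε') - (R + ε') * (z - a) + δ * (z - a) ^ 2 with hQdef
  have hQeval : ∀ z : ℝ, Q z = -(c + ε') - (R + ε') * (z - a) + δ * (z - a) ^ 2 :=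
    fun z => rfl
  have hQc : Continuous Q := by
    have h1 : Continuous fun z : ℝ => z - a := continuous_id.sub continuous_const
    exact (continuous_const.sub (continuous_const.mul h1)).add
      (continuous_const.mul (h1.pow 2))
  have hQ' : ∀ z : ℝ, HasDerivAt Q (-(R + ε') + δ * (2 * (z - a))) z := by
    intro z
    have h1 : HasDerivAt (fun z : ℝ => z - a) 1 z := (hasDerivAt_id z).sub_const a
    have h2 : HasDerivAt (fun z : ℝ => (R + ε') * (z - a)) ((R + ε') * 1) z := h1.const_mul _
    have h3 : HasDerivAt (fun z : ℝ => (z - a) ^ 2) (2 * (z - a) ^ 1 * 1) z := by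
      simpa using h1.fun_pow 2
    have h4 := ((hasDerivAt_const z (-(c + ε'))).sub h2).add (h3.const_mul δ)
    rw [hQdef]
    exact h4.congr_deriv (by ring)
  set u : ℝ × ℝ → ℝ := fun p => ζ p.1 p.2 + Q p.2 with hudef
  have hueval : ∀ p : ℝ × ℝ, u p = ζ p.1 p.2 + Q p.2 := fun p => rfl
  have hu_contS : ContinuousOn u (Set.univ ×ˢ Set.Icc a b) :=
    hcont.add (hQc.comp continuous_snd).continuousOn
  clear_value Q u
  clear hQdef hudef
  -- decay threshold
  obtain ⟨X, hX⟩ := hdecay (ε' / 2) (by positivity)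
  obtain ⟨Y, hYX, hYx0⟩ : ∃ Y : ℝ, X ≤ Y ∧ |x0| ≤ Y :=
    ⟨max X |x0|, le_max_left _ _, le_max_right _ _⟩
  have hKc : IsCompact (Set.Icc (-Y) Y ×ˢ Set.Icc a b) := isCompact_Icc.prod isCompact_Icc
  have hx0Y : x0 ∈ Set.Icc (-Y) Y := by
    obtain ⟨h1, h2⟩ := abs_le.mp hYx0
    exact ⟨h1, h2⟩
  have hKne : (Set.Icc (-Y) Y ×ˢ Set.Icc a b).Nonempty := ⟨(x0, z0), hx0Y, hz0⟩
  have hKsub : Set.Icc (-Y) Y ×ˢ Set.Icc a b ⊆ Set.univ ×ˢ Set.Icc a b :=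
    prod_mono (subset_univ _) subset_rfl
  obtain ⟨p, hpK, hpmax⟩ := hKc.exists_isMaxOn hKne (hu_contS.mono hKsub)
  -- it suffices that u p ≤ 0
  suffices hup : u p ≤ 0 by
    have h1 : u (x0, z0) ≤ u p := hpmax ⟨hx0Y, hz0⟩
    rw [hueval (x0, z0)] at h1
    have h2 : ζ x0 z0 + Q z0 ≤ 0 := le_trans h1 hup
    rw [hQeval z0] at h2
    have hz0b : z0 - a ≤ b - a := by linarith [hz0.2]
    nlinarith [hz0.1, sq_nonneg (z0 - a)]
  by_contra hup
  push_neg at hup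
  -- negativity far away
  have hfar : ∀ q : ℝ × ℝ, X ≤ |q.1| → q.2 ∈ Set.Icc a b → u q ≤ -(ε' / 4) := by
    intro q hq1 hq2
    have h1 : |ζ q.1 q.2| ≤ ε' / 2 := hX q.1 q.2 hq1 hq2
    have h2 : 0 ≤ q.2 - a := by linarith [hq2.1]
    have h3 : q.2 - a ≤ b - a := by linarith [hq2.2]
    have h4 : δ * (q.2 - a) ^ 2 ≤ δ * (b - a) ^ 2 :=
      mul_le_mul_of_nonneg_left (pow_le_pow_left₀ h2 h3 2) hδ.le
    have h5 : 0 ≤ (R + ε') * (q.2 - a) := by nlinarith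
    have h6 := abs_le.mp h1
    rw [hueval q, hQeval q.2]
    nlinarith
  -- p is a global max over the strip
  have hglob : ∀ q : ℝ × ℝ, q.2 ∈ Set.Icc a b → u q ≤ u p := by
    intro q hq2
    by_cases hq1 : |q.1| ≤ Y
    · exact hpmax ⟨abs_le.mp hq1, hq2⟩
    · push_neg at hq1
      have hq1' : X ≤ |q.1| := le_trans hYX hq1.le
      have h5 := hfar q hq1' hq2
      linarith
  have hpa : a ≤ p.2 := hpK.2.1
  have hpb : p.2 ≤ b := hpK.2.2
  rcases eq_or_lt_of_le hpa with hpa' | hpa'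
  · -- bottom: p.2 = a
    have h1 : ζ p.1 a ≤ c := hbot p.1
    have h2 : u p = ζ p.1 p.2 + Q p.2 := hueval p
    rw [← hpa', hQeval a] at h2
    nlinarith
  rcases eq_or_lt_of_le hpb with hpb' | hpb'
  · -- top: p.2 = b
    obtain ⟨d, hd, hdR⟩ := htop p.1
    have hG : HasDerivWithinAt (fun z => ζ p.1 z + Q z)
        (d + (-(R + ε') + δ * (2 * (b - a)))) (Set.Iic b) b :=
      hd.add (hQ' b).hasDerivWithinAt
    have hGmax : ∀ᶠ z in nhdsWithin b (Set.Iio b),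
        ζ p.1 z + Q z ≤ ζ p.1 b + Q b := by
      filter_upwards [Ioo_mem_nhdsLT hab] with z hz
      have h1 : u (p.1, z) ≤ u p := hglob (p.1, z) (Ioo_subset_Icc_self hz)
      rw [hueval (p.1, z), hueval p, hpb'] at h1
      exact h1
    have h0 := nonneg_of_top_max hG hGmax
    nlinarith
  · -- interior
    have hz1mem : p.2 ∈ Set.Ioo a b := ⟨hpa', hpb'⟩
    have hIoo_mem : Set.Ioo a b ∈ nhds p.2 := isOpen_Ioo.mem_nhds hz1mem
    -- x-slice
    have hemb : ContDiff ℝ 2 (fun t : ℝ => (t, p.2)) := contDiff_id.prodMk contDiff_const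
    have hh : ContDiffOn ℝ 2 (fun t => ζ t p.2) Set.univ :=
      hsmooth.comp hemb.contDiffOn (fun t _ => ⟨mem_univ _, hz1mem⟩)
    have hhd : ∀ t : ℝ, DifferentiableAt ℝ (fun t => ζ t p.2) t := fun t =>
      (hh.differentiableOn (by norm_num)).differentiableAt univ_mem
    have hh1 : ContDiffOn ℝ 1 (deriv (fun t => ζ t p.2)) Set.univ :=
      hh.deriv_of_isOpen isOpen_univ (by norm_num)
    have hh2 : HasDerivAt (deriv (fun t => ζ t p.2))
        (deriv (deriv (fun t => ζ t p.2)) p.1) p.1 :=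
      ((hh1.differentiableOn one_ne_zero).differentiableAt univ_mem).hasDerivAt
    have hhmax : IsLocalMax (fun t => ζ t p.2) p.1 := by
      refine Filter.Eventually.of_forall fun t => ?_
      have h1 : u (t, p.2) ≤ u p := hglob (t, p.2) (Ioo_subset_Icc_self hz1mem)
      rw [hueval (t, p.2), hueval p] at h1
      simpa using h1
    have hxslice : deriv (deriv (fun t => ζ t p.2)) p.1 ≤ 0 :=
      secondDeriv_nonpos_of_localMax (Filter.Eventually.of_forall hhd) hh2 hhmax
    -- z-slice
    have hemb2 : ContDiff ℝ 2 (fun z : ℝ => (p.1, z)) := contDiff_const.prodMk contDiff_id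
    have hg : ContDiffOn ℝ 2 (fun z => ζ p.1 z) (Set.Ioo a b) :=
      hsmooth.comp hemb2.contDiffOn (fun z hz => ⟨mem_univ _, hz⟩)
    have hgd : ∀ z ∈ Set.Ioo a b, DifferentiableAt ℝ (fun z => ζ p.1 z) z := fun z hz =>
      (hg.differentiableOn (by norm_num)).differentiableAt (isOpen_Ioo.mem_nhds hz)
    have hg1 : ContDiffOn ℝ 1 (deriv (fun z => ζ p.1 z)) (Set.Ioo a b) :=
      hg.deriv_of_isOpen isOpen_Ioo (by norm_num)
    have hg2 : HasDerivAt (deriv (fun z => ζ p.1 z))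
        (deriv (deriv (fun z => ζ p.1 z)) p.2) p.2 :=
      ((hg1.differentiableOn one_ne_zero).differentiableAt hIoo_mem).hasDerivAt
    have hGd : ∀ z ∈ Set.Ioo a b, DifferentiableAt ℝ (fun z => ζ p.1 z + Q z) z :=
      fun z hz => (hgd z hz).add (hQ' z).differentiableAt
    have hderivG : deriv (fun z => ζ p.1 z + Q z) =ᶠ[nhds p.2]
        fun z => deriv (fun z => ζ p.1 z) z + (-(R + ε') + δ * (2 * (z - a))) := by
      filter_upwards [hIoo_mem] with z hz
      exact ((hgd z hz).hasDerivAt.add (hQ' z)).deriv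
    have hlin : HasDerivAt (fun z : ℝ => -(R + ε') + δ * (2 * (z - a))) (δ * 2) p.2 := by
      have h1 : HasDerivAt (fun z : ℝ => 2 * (z - a)) (2 * 1) p.2 :=
        ((hasDerivAt_id p.2).sub_const a).const_mul 2
      have h2 := (h1.const_mul δ).const_add (-(R + ε'))
      exact h2.congr_deriv (by ring)
    have hG2 : HasDerivAt (deriv (fun z => ζ p.1 z + Q z))
        (deriv (deriv (fun z => ζ p.1 z)) p.2 + δ * 2) p.2 :=
      (hg2.add hlin).congr_of_eventuallyEq hderivG
    have hGmax : IsLocalMax (fun z => ζ p.1 z + Q z) p.2 := by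
      filter_upwards [hIoo_mem] with z hz
      have h1 : u (p.1, z) ≤ u p := hglob (p.1, z) (Ioo_subset_Icc_self hz)
      rw [hueval (p.1, z), hueval p] at h1
      exact h1
    have hGd_ev : ∀ᶠ z in nhds p.2, DifferentiableAt ℝ (fun z => ζ p.1 z + Q z) z := by
      filter_upwards [hIoo_mem] with z hz
      exact hGd z hz
    have hzslice : deriv (deriv (fun z => ζ p.1 z)) p.2 + δ * 2 ≤ 0 :=
      secondDeriv_nonpos_of_localMax hGd_ev hG2 hGmax
    have hhh := hharm p.1 p.2 hpa' hpb'
    linarith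

/-- A continuous function on the strip `ℝ × [a, b]` that is harmonic in the interior, decays
to `0` uniformly as `|x| → ∞`, is bounded by `c` in absolute value on the bottom boundary,
and whose `z`-derivative on the top boundary is bounded by `R` in absolute value, satisfies
`|ζ(x,z)| ≤ c + R (z − a)` throughout the strip. -/
theorem strip_comparison_bound (a b c R : ℝ) (hab : a < b) (hc : 0 ≤ c) (hR : 0 ≤ R)
    (ζ : ℝ → ℝ → ℝ)
    (hcont : ContinuousOn (fun p : ℝ × ℝ => ζ p.1 p.2) (Set.univ ×ˢ Set.Icc a b))
    (hsmooth : ContDiffOn ℝ 2 (fun p : ℝ × ℝ => ζ p.1 p.2) (Set.univ ×ˢ Set.Ioo a b))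
    (hharm : ∀ x z : ℝ, a < z → z < b →
      deriv (deriv (fun t => ζ t z)) x + deriv (deriv (fun t => ζ x t)) z = 0)
    (hdecay : ∀ ε > (0 : ℝ), ∃ X : ℝ, ∀ x z : ℝ, X ≤ |x| → z ∈ Set.Icc a b → |ζ x z| ≤ ε)
    (hbot : ∀ x : ℝ, |ζ x a| ≤ c)
    (htop : ∀ x : ℝ, ∃ d : ℝ,
      HasDerivWithinAt (fun z => ζ x z) d (Set.Iic b) b ∧ |d| ≤ R) :
    ∀ x : ℝ, ∀ z ∈ Set.Icc a b, |ζ x z| ≤ c + R * (z - a) := by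
  have hub := strip_one_sided a b c R hab hc hR ζ hcont hsmooth hharm hdecay
    (fun x => (abs_le.mp (hbot x)).2)
    (fun x => by
      obtain ⟨d, hd, hdR⟩ := htop x
      exact ⟨d, hd, (abs_le.mp hdR).2⟩)
  have hlb := strip_one_sided a b c R hab hc hR (fun x z => -ζ x z)
    hcont.neg hsmooth.neg
    (fun x z h1 h2 => by
      have e := hharm x z h1 h2
      have d1 : (deriv fun t => -ζ t z) = fun t => -deriv (fun s => ζ s z) t :=
        funext fun t => deriv.neg
      have d2 : deriv (deriv fun t => -ζ t z) x = -deriv (deriv fun s => ζ s z) x := by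
        rw [d1]; exact deriv.neg
      have d3 : (deriv fun t => -ζ x t) = fun t => -deriv (fun s => ζ x s) t :=
        funext fun t => deriv.neg
      have d4 : deriv (deriv fun t => -ζ x t) z = -deriv (deriv fun s => ζ x s) z := by
        rw [d3]; exact deriv.neg
      rw [d2, d4]
      linarith)
    (fun ε hε => by
      obtain ⟨X, hX⟩ := hdecay ε hε
      exact ⟨X, fun x z hx hz => by rw [abs_neg]; exact hX x z hx hz⟩)
    (fun x => by
      have h := (abs_le.mp (hbot x)).1
      show -ζ x a ≤ c
      linarith)
    (fun x => by
      obtain ⟨d, hd, hdR⟩ := htop x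
      obtain ⟨h1, h2⟩ := abs_le.mp hdR
      exact ⟨-d, hd.neg, by linarith⟩)
  intro x z hz
  rw [abs_le]
  refine ⟨?_, hub x z hz⟩
  have h : -ζ x z ≤ c + R * (z - a) := hlb x z hz
  linarith
end
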